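/- For α > 4 and z_mid defined by α z_mid(1 - z_mid) = 1 with z_mid = 1/2 - √(1/4 - 1/α), all solutions (p_t, r_t) of the planar ODE system dp/dt = α p²(1-p) - p, dr/dt = α[r² - 2(r-p)²](1-r) - r starting in D = {(p,r) : 0 ≤ p ≤ 1, p ≤ r ≤ min(1, 2p)} with p_0 = z_mid and r_0 > z_mid converge as t → ∞ to (z_mid, r_mid), where r_mid > z_mid is the middle zero of r ↦ α[r² - 2(r - z_mid)²](1-r) - r. -/

import Mathlib

open Filter Set

private lemma cubic_diff_bound (A B C E M x c : ℝ) (hx : |x| ≤ M) (hc : |c| ≤ M) :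
    |(A*x^3 + B*x^2 + C*x + E) - (A*c^3 + B*c^2 + C*c + E)| ≤
      (|A| *(3*M^2) + |B| *(2*M) + |C|) * |x - c| := by
  have hM : 0 ≤ M := le_trans (abs_nonneg x) hx
  obtain ⟨hx1, hx2⟩ := abs_le.mp hx
  obtain ⟨hc1, hc2⟩ := abs_le.mp hc
  have key : (A*x^3 + B*x^2 + C*x + E) - (A*c^3 + B*c^2 + C*c + E)
      = (A*(x^2 + x*c + c^2) + B*(x + c) + C) * (x - c) := by ring
  rw [key, abs_mul]
  have hxc : |x*c| ≤ M*M := by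
    rw [abs_mul]; exact mul_le_mul hx hc (abs_nonneg c) hM
  obtain ⟨hxc1, hxc2⟩ := abs_le.mp hxc
  have hS : |x^2 + x*c + c^2| ≤ 3*M^2 := by
    rw [abs_le]; constructor <;> nlinarith
  have hT : |x + c| ≤ 2*M := by
    calc |x + c| ≤ |x| + |c| := abs_add_le _ _
    _ ≤ 2*M := by linarith
  gcongr
  calc |A*(x^2 + x*c + c^2) + B*(x + c) + C|
      ≤ |A*(x^2 + x*c + c^2) + B*(x + c)| + |C| := abs_add_le _ _
    _ ≤ |A*(x^2 + x*c + c^2)| + |B*(x + c)| + |C| := by linarith [abs_add_le (A*(x^2 + x*c + c^2)) (B*(x + c))]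
    _ = |A| * |x^2 + x*c + c^2| + |B| * |x + c| + |C| := by rw [abs_mul, abs_mul]
    _ ≤ |A| * (3*M^2) + |B| * (2*M) + |C| := by gcongr

private lemma cubic_lip (A B C E c : ℝ) (hc0 : A*c^3 + B*c^2 + C*c + E = 0) (M : ℝ) :
    ∃ K, 0 ≤ K ∧ ∀ x, |x| ≤ M → |A*x^3 + B*x^2 + C*x + E| ≤ K * |x - c| := by
  set M' := max M |c| with hM'
  have hM'0 : 0 ≤ M' := le_trans (abs_nonneg c) (le_max_right _ _)
  refine ⟨|A| *(3*M'^2) + |B| *(2*M') + |C|, ?_, ?_⟩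
  · have h1 : 0 ≤ |A| *(3*M'^2) := by positivity
    have h2 : 0 ≤ |B| *(2*M') := mul_nonneg (abs_nonneg _) (by linarith)
    have h3 := abs_nonneg C
    linarith
  · intro x hx
    have := cubic_diff_bound A B C E M' x c (hx.trans (le_max_left _ _)) (le_max_right _ _)
    rwa [hc0, sub_zero] at this

private lemma ode_const_of_lip {F : ℝ → ℝ} {y : ℝ → ℝ} {c a b : ℝ}
    (hd : ∀ t ∈ Icc a b, HasDerivAt y (F (y t)) t)
    (hya : y a = c) (hFc : F c = 0)
    (hlip : ∀ M : ℝ, ∃ K, 0 ≤ K ∧ ∀ x, |x| ≤ M → |F x| ≤ K * |x - c|) :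
    ∀ t ∈ Icc a b, y t = c := by
  have hcont : ContinuousOn y (Icc a b) := fun t ht =>
    ((hd t ht).continuousAt).continuousWithinAt
  obtain ⟨M, hM⟩ := isCompact_Icc.exists_bound_of_continuousOn hcont
  obtain ⟨K, hK0, hKb⟩ := hlip M
  have key := norm_le_gronwallBound_of_norm_deriv_right_le
    (f := fun t => y t - c) (f' := fun t => F (y t)) (δ := 0) (K := K) (ε := 0) (a := a) (b := b)
    (hcont.sub continuousOn_const)
    (fun x hx => ((hd x (Ico_subset_Icc_self hx)).sub_const c).hasDerivWithinAt)
    (by simp [hya])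
    (fun x hx => by
      have := hKb (y x) (by simpa using hM x (Ico_subset_Icc_self hx))
      simpa [Real.norm_eq_abs] using this)
  intro t ht
  have h1 := key t ht
  rw [gronwallBound_ε0_δ0] at h1
  have h2 : |y t - c| ≤ 0 := by simpa [Real.norm_eq_abs] using h1
  have h3 : y t - c = 0 := abs_eq_zero.mp (le_antisymm h2 (abs_nonneg _))
  linarith

private lemma stay_ge {y G : ℝ → ℝ} {c : ℝ}
    (hd : ∀ t ≥ (0:ℝ), HasDerivAt y (G (y t)) t)
    (hGc : 0 < G c) (h0 : c ≤ y 0) : ∀ t ≥ (0:ℝ), c ≤ y t := by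
  by_contra hcon
  push_neg at hcon
  obtain ⟨t1, ht1, hlt⟩ := hcon
  have hcont : ContinuousOn y (Icc 0 t1) := fun t ht =>
    ((hd t ht.1).continuousAt).continuousWithinAt
  have ht1pos : (0:ℝ) < t1 := by
    rcases eq_or_lt_of_le ht1 with h | h
    · exfalso; rw [← h] at hlt; linarith
    · exact h
  set S : Set ℝ := Icc 0 t1 ∩ y ⁻¹' Ici c with hSdef
  have hS0 : (0:ℝ) ∈ S := ⟨⟨le_refl 0, ht1⟩, h0⟩
  have hSc : IsClosed S := hcont.preimage_isClosed_of_isClosed isClosed_Icc isClosed_Ici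
  have hSbdd : BddAbove S := ⟨t1, fun x hx => hx.1.2⟩
  set ts := sSup S with hts
  have htsS : ts ∈ S := hSc.csSup_mem ⟨0, hS0⟩ hSbdd
  have hts0 : 0 ≤ ts := htsS.1.1
  have htslt : ts < t1 := by
    rcases eq_or_lt_of_le htsS.1.2 with h | h
    · exfalso; have := htsS.2; rw [h] at this; exact absurd this (not_le.mpr hlt)
    · exact h
  have hafter : ∀ t, ts < t → t ≤ t1 → y t < c := by
    intro t h1 h2
    by_contra hge
    push_neg at hge
    have : t ∈ S := ⟨⟨le_trans hts0 h1.le, h2⟩, hge⟩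
    exact absurd (le_csSup hSbdd this) (not_le.mpr h1)
  have hder := hd ts hts0
  have hyts_le : y ts ≤ c := by
    have htnd : Tendsto y (nhdsWithin ts (Ioi ts)) (nhds (y ts)) :=
      (hder.continuousAt).continuousWithinAt
    refine le_of_tendsto htnd ?_
    filter_upwards [Ioc_mem_nhdsGT htslt] with t ht
    exact (hafter t ht.1 ht.2).le
  have hyts : y ts = c := le_antisymm hyts_le htsS.2
  rw [hyts] at hder
  have hslope : Tendsto (slope y ts) (nhdsWithin ts {ts}ᶜ) (nhds (G c)) :=
    hasDerivAt_iff_tendsto_slope.mp hder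
  have hev : ∀ᶠ t in nhdsWithin ts (Ioi ts), 0 < slope y ts t :=
    (hslope.eventually (lt_mem_nhds hGc)).filter_mono
      (nhdsWithin_mono ts (fun x hx => ne_of_gt hx))
  have hev2 : ∀ᶠ t in nhdsWithin ts (Ioi ts), t ∈ Ioc ts t1 :=
    eventually_of_mem (Ioc_mem_nhdsGT htslt) (fun _ h => h)
  obtain ⟨t, hpos, hmem⟩ := (hev.and hev2).exists
  have hslope_eq : slope y ts t = (y t - y ts) / (t - ts) := slope_def_field y ts t
  rw [hslope_eq, hyts] at hpos
  have htts : 0 < t - ts := sub_pos.mpr hmem.1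
  have : 0 < y t - c := by
    by_contra hle
    push_neg at hle
    have : (y t - c) / (t - ts) ≤ 0 := div_nonpos_of_nonpos_of_nonneg hle htts.le
    linarith
  exact absurd (hafter t hmem.1 hmem.2) (not_lt.mpr (by linarith))

private lemma stay_le {y G : ℝ → ℝ} {c : ℝ}
    (hd : ∀ t ≥ (0:ℝ), HasDerivAt y (G (y t)) t)
    (hGc : G c < 0) (h0 : y 0 ≤ c) : ∀ t ≥ (0:ℝ), y t ≤ c := by
  have key := stay_ge (y := fun t => -y t) (G := fun x => -G (-x)) (c := -c)
    (fun t ht => (hd t ht).neg.congr_deriv (by simp)) (by simpa using hGc) (by simpa using h0)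
  intro t ht
  have := key t ht
  simpa using this

private lemma grow_of_deriv_ge {y d : ℝ → ℝ} {m t0 : ℝ}
    (hd : ∀ t ≥ t0, HasDerivAt y (d t) t) (hm : ∀ t ≥ t0, m ≤ d t) :
    ∀ t ≥ t0, y t0 + m * (t - t0) ≤ y t := by
  have hmono : MonotoneOn (fun t => y t - m * t) (Ici t0) := by
    apply monotoneOn_of_deriv_nonneg (convex_Ici t0)
    · exact fun t ht => (((hd t ht).sub ((hasDerivAt_id t).const_mul m)).continuousAt).continuousWithinAt
    · intro t ht
      rw [interior_Ici] at ht
      exact (((hd t ht.le).sub ((hasDerivAt_id t).const_mul m)).differentiableAt).differentiableWithinAt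
    · intro t ht
      rw [interior_Ici] at ht
      have hder : HasDerivAt (fun t => y t - m * t) (d t - m) t := by
        exact ((hd t ht.le).sub ((hasDerivAt_id t).const_mul m)).congr_deriv (by ring)
      rw [hder.deriv]
      linarith [hm t ht.le]
  intro t ht
  have := hmono (self_mem_Ici) (mem_Ici.mpr ht) ht
  simp only at this
  linarith


/-- For `α > 4` and `z_mid = 1/2 - √(1/4 - 1/α)` (so `α z_mid(1-z_mid) = 1`), every
solution of the planar ODE `dp/dt = αp²(1-p) - p`, `dr/dt = α[r² - 2(r-p)²](1-r) - r`
started in `D = {(p,r) : 0 ≤ p ≤ 1, p ≤ r ≤ min(1, 2p)}` with `p₀ = z_mid` and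
`r₀ > z_mid` converges as `t → ∞` to `(z_mid, r_mid)`, where `r_mid ∈ (z_mid, 2 z_mid]`
is the middle zero of `r ↦ α[r² - 2(r - z_mid)²](1-r) - r`. -/
theorem stmt9 (α : ℝ) (hα : 4 < α) (zmid : ℝ)
    (hz : zmid = 1 / 2 - Real.sqrt (1 / 4 - 1 / α))
    (p r : ℝ → ℝ)
    (hodep : ∀ t ≥ (0:ℝ), HasDerivAt p (α * (p t) ^ 2 * (1 - p t) - p t) t)
    (hoder : ∀ t ≥ (0:ℝ),
      HasDerivAt r (α * ((r t) ^ 2 - 2 * (r t - p t) ^ 2) * (1 - r t) - r t) t)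
    (hD : 0 ≤ p 0 ∧ p 0 ≤ 1 ∧ p 0 ≤ r 0 ∧ r 0 ≤ min 1 (2 * p 0))
    (hp0 : p 0 = zmid) (hr0 : zmid < r 0) :
    ∃ rmid ∈ Set.Ioc zmid (2 * zmid),
      α * (rmid ^ 2 - 2 * (rmid - zmid) ^ 2) * (1 - rmid) - rmid = 0 ∧
      Tendsto (fun t => (p t, r t)) atTop (nhds (zmid, rmid)) := by
  obtain ⟨hp00, hp01, hpr, hrmin⟩ := hD
  have hα0 : (0:ℝ) < α := by linarith
  have h14 : (0:ℝ) < 1/4 - 1/α := by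
    have h1 : 1/α < 1/4 := one_div_lt_one_div_of_lt (by norm_num) hα
    linarith
  obtain ⟨s, hseq, hs0, hs2⟩ : ∃ s : ℝ, s = Real.sqrt (1/4 - 1/α) ∧ 0 < s ∧
      s^2 = 1/4 - 1/α :=
    ⟨Real.sqrt (1/4 - 1/α), rfl, Real.sqrt_pos.mpr h14, Real.sq_sqrt h14.le⟩
  have hz' : zmid = 1/2 - s := by rw [hz, hseq]
  clear hz hseq
  have hs12 : s < 1/2 := by nlinarith [one_div_pos.mpr hα0]
  have hz0 : 0 < zmid := by rw [hz']; linarith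
  have hz12 : zmid < 1/2 := by rw [hz']; linarith
  have hz1 : α * zmid * (1 - zmid) = 1 := by
    have hzz : zmid * (1 - zmid) = 1/α := by
      rw [hz']; linear_combination (-1 : ℝ) * hs2
    rw [mul_assoc, hzz]
    field_simp
  clear hz' hs2 hs12 hs0 h14
  -- p stays at zmid
  have hpz : ∀ t ≥ (0:ℝ), p t = zmid := by
    intro t ht
    have happ := ode_const_of_lip (F := fun x => α * x^2 * (1-x) - x) (a := 0) (b := t)
      (fun u hu => hodep u hu.1) hp0
      (by show α * zmid^2 * (1-zmid) - zmid = 0; linear_combination zmid * hz1)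
      (fun M => by
        obtain ⟨K, h0, hb⟩ := cubic_lip (-α) α (-1) 0 zmid
          (by linear_combination zmid * hz1) M
        refine ⟨K, h0, fun x hx => ?_⟩
        show |α * x^2 * (1-x) - x| ≤ K * |x - zmid|
        rw [show α * x^2 * (1-x) - x = (-α)*x^3 + α*x^2 + (-1)*x + 0 from by ring]
        exact hb x hx)
    exact happ t ⟨ht, le_refl t⟩
  -- the roots of the cubic in r
  have hD9 : (0:ℝ) < 9*zmid^2 - 2*zmid + 1 := by nlinarith [sq_nonneg (3*zmid - 1/3)]
  obtain ⟨sD, hsD0, hsD2⟩ : ∃ sD : ℝ, 0 < sD ∧ sD^2 = 9*zmid^2 - 2*zmid + 1 :=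
    ⟨Real.sqrt (9*zmid^2 - 2*zmid + 1), Real.sqrt_pos.mpr hD9, Real.sq_sqrt hD9.le⟩
  set rm := ((1 + 3*zmid) - sD)/2 with hrmdef
  set rb := ((1 + 3*zmid) + sD)/2 with hrbdef
  have hzrm : zmid < rm := by
    have hkey : sD < 1 + zmid := by nlinarith [hsD0, hz0, hz12, hsD2]
    rw [hrmdef]; linarith
  have hrm2z : rm < 2*zmid := by
    have hkey : 1 - zmid < sD := by nlinarith [hsD0, hz0, hsD2]
    rw [hrmdef]; linarith
  have hrb1 : 1 < rb := by
    have hkey : 1 - 3*zmid < sD := by nlinarith [hsD0, hz0, hsD2]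
    rw [hrbdef]; linarith
  have hrm1 : rm < 1 := by linarith
  have hfact : ∀ x, α * (x^2 - 2*(x - zmid)^2) * (1 - x) - x
      = α * (x - zmid) * (x - rm) * (x - rb) := by
    intro x
    rw [hrmdef, hrbdef]
    linear_combination x * hz1 + (α*(x - zmid)/4) * hsD2
  set G : ℝ → ℝ := fun x => α * (x - zmid) * (x - rm) * (x - rb) with hGdef
  have hGrm : G rm = 0 := by simp only [hGdef]; ring
  have hgr : ∀ t ≥ (0:ℝ), HasDerivAt r (G (r t)) t := by
    intro t ht
    have h1 := hoder t ht
    rw [hpz t ht] at h1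
    rw [hfact (r t)] at h1
    exact h1
  have hGpos : ∀ x, zmid < x → x < rm → 0 < G x := by
    intro x h1 h2
    have h3 : x < rb := by linarith
    have key : 0 < α * (x - zmid) * ((rm - x) * (rb - x)) :=
      mul_pos (mul_pos hα0 (sub_pos.mpr h1)) (mul_pos (sub_pos.mpr h2) (sub_pos.mpr h3))
    have heq : G x = α * (x - zmid) * ((rm - x) * (rb - x)) := by
      simp only [hGdef]; ring
    rw [heq]; exact key
  have hGneg : ∀ x, zmid < x → rm < x → x ≤ 1 → G x < 0 := by
    intro x h1 h2 h3
    have h4 : x < rb := lt_of_le_of_lt h3 hrb1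
    have key : 0 < α * (x - zmid) * ((x - rm) * (rb - x)) :=
      mul_pos (mul_pos hα0 (sub_pos.mpr h1)) (mul_pos (sub_pos.mpr h2) (sub_pos.mpr h4))
    have heq : G x = -(α * (x - zmid) * ((x - rm) * (rb - x))) := by
      simp only [hGdef]; ring
    rw [heq]; linarith
  have hGpoly : ∀ x, G x = α*x^3 + (-α*(zmid+rm+rb))*x^2
      + (α*(zmid*rm+zmid*rb+rm*rb))*x + (-α*(zmid*rm*rb)) := by
    intro x; simp only [hGdef]; ring
  have hlipG : ∀ M, ∃ K, 0 ≤ K ∧ ∀ x, |x| ≤ M → |G x| ≤ K * |x - rm| := by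
    intro M
    obtain ⟨K, h0, hb⟩ := cubic_lip α (-α*(zmid+rm+rb)) (α*(zmid*rm+zmid*rb+rm*rb))
      (-α*(zmid*rm*rb)) rm (by rw [← hGpoly rm]; exact hGrm) M
    exact ⟨K, h0, fun x hx => by rw [hGpoly x]; exact hb x hx⟩
  have hcontG : Continuous G := by
    rw [hGdef]; fun_prop
  have hcontr : ∀ a b : ℝ, 0 ≤ a → ContinuousOn r (Icc a b) := by
    intro a b ha
    exact fun u hu => ((hgr u (le_trans ha hu.1)).continuousAt).continuousWithinAt
  -- r never hits rm (if it doesn't start there)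
  have hne : r 0 ≠ rm → ∀ t ≥ (0:ℝ), r t ≠ rm := by
    intro hne0 t ht heq
    have hdv : ∀ u ∈ Icc 0 t, HasDerivAt (fun w => r (t - w)) (-(G (r (t - u)))) u := by
      intro u hu
      have h1 : HasDerivAt (fun w : ℝ => t - w) (-1) u := by
        simpa using (hasDerivAt_id u).const_sub t
      have h2 := (hgr (t - u) (by linarith [hu.2] : (0:ℝ) ≤ t - u)).comp u h1
      exact h2.congr_deriv (by ring)
    have happ := ode_const_of_lip (F := fun x => -(G x)) (a := 0) (b := t)
      (y := fun w => r (t - w)) hdv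
      (by simpa using heq)
      (by simp [hGrm])
      (fun M => by
        obtain ⟨K, h0, hb⟩ := hlipG M
        exact ⟨K, h0, fun x hx => by rw [abs_neg]; exact hb x hx⟩)
    have := happ t ⟨ht, le_refl t⟩
    simp only [sub_self] at this
    exact hne0 this
  have hr02z : r 0 ≤ 2*zmid := by
    have := le_min_iff.mp hrmin
    rw [hp0] at this
    exact this.2
  have hr01 : r 0 ≤ 1 := (le_min_iff.mp hrmin).1
  -- main limit claim
  have hrt_lim : Tendsto r atTop (nhds rm) := by
    rcases lt_trichotomy (r 0) rm with hA | hB | hC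
    · -- r 0 < rm : increasing case
      have hner := hne (ne_of_lt hA)
      have hlow : ∀ t ≥ (0:ℝ), r 0 ≤ r t := stay_ge hgr (hGpos (r 0) hr0 hA) (le_refl (r 0))
      have hup : ∀ t ≥ (0:ℝ), r t < rm := by
        intro t ht
        rcases lt_or_ge (r t) rm with h | h
        · exact h
        · exfalso
          obtain ⟨u, hu, hru⟩ := intermediate_value_Icc ht (hcontr 0 t le_rfl)
            (⟨hA.le, h⟩ : rm ∈ Icc (r 0) (r t))
          exact hner u hu.1 hru
      have hmono : MonotoneOn r (Ici 0) := by
        apply monotoneOn_of_deriv_nonneg (convex_Ici 0)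
        · exact fun u hu => ((hgr u hu).continuousAt).continuousWithinAt
        · intro u hu; rw [interior_Ici] at hu
          exact ((hgr u hu.le).differentiableAt).differentiableWithinAt
        · intro u hu; rw [interior_Ici] at hu
          rw [(hgr u hu.le).deriv]
          exact (hGpos (r u) (lt_of_lt_of_le hr0 (hlow u hu.le)) (hup u hu.le)).le
      have hrtmono : Monotone (fun t => r (max t 0)) := fun a b hab =>
        hmono (mem_Ici.mpr (le_max_right a 0)) (mem_Ici.mpr (le_max_right b 0))
          (max_le_max hab le_rfl)
      have hrtbdd : BddAbove (Set.range (fun t => r (max t 0))) := by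
        refine ⟨rm, ?_⟩
        rintro x ⟨u, rfl⟩
        exact (hup _ (le_max_right u 0)).le
      have hL := tendsto_atTop_ciSup hrtmono hrtbdd
      have hLrt : Tendsto r atTop (nhds (⨆ u, r (max u 0))) := by
        apply hL.congr'
        filter_upwards [eventually_ge_atTop (0:ℝ)] with u hu
        rw [max_eq_left hu]
      set L := ⨆ u, r (max u 0) with hLdef
      have hLle : L ≤ rm := le_of_tendsto hLrt (by
        filter_upwards [eventually_ge_atTop (0:ℝ)] with u hu
        exact (hup u hu).le)
      have hLge : r 0 ≤ L := ge_of_tendsto hLrt (by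
        filter_upwards [eventually_ge_atTop (0:ℝ)] with u hu
        exact hlow u hu)
      have hLeq : L = rm := by
        by_contra hne2
        have hLlt : L < rm := lt_of_le_of_ne hLle hne2
        have hGL : 0 < G L := hGpos L (lt_of_lt_of_le hr0 hLge) hLlt
        have hev : ∀ᶠ u in atTop, G L / 2 ≤ G (r u) := by
          have h1 : Tendsto (fun u => G (r u)) atTop (nhds (G L)) :=
            (hcontG.tendsto L).comp hLrt
          exact (h1.eventually (lt_mem_nhds (half_lt_self hGL))).mono fun u hu => hu.le
        obtain ⟨t0', ht0'⟩ := eventually_atTop.mp hev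
        set t0 := max t0' 0 with ht0def
        have ht00 : (0:ℝ) ≤ t0 := le_max_right _ _
        have hgrow := grow_of_deriv_ge (y := r) (d := fun u => G (r u)) (m := G L / 2) (t0 := t0)
          (fun u hu => hgr u (le_trans ht00 hu))
          (fun u hu => ht0' u (le_trans (le_max_left _ _) hu))
        set T := t0 + (rm - r t0)/(G L / 2) + 1 with hTdef
        have hrt0 : r t0 < rm := hup t0 ht00
        have hdiv : 0 ≤ (rm - r t0)/(G L / 2) := div_nonneg (by linarith) (by linarith)
        have hT0 : t0 ≤ T := by rw [hTdef]; linarith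
        have hgT := hgrow T hT0
        have hGL2 : G L / 2 ≠ 0 := by linarith
        have h5 : (rm - r t0) / (G L / 2) * (G L / 2) = rm - r t0 :=
          div_mul_cancel₀ _ hGL2
        have h6 : T - t0 = (rm - r t0) / (G L / 2) + 1 := by rw [hTdef]; ring
        have hcalc : r t0 + G L / 2 * (T - t0) = rm + G L / 2 := by
          calc r t0 + G L / 2 * (T - t0)
              = r t0 + (rm - r t0) / (G L / 2) * (G L / 2) + G L / 2 := by rw [h6]; ring
            _ = rm + G L / 2 := by rw [h5]; ring
        have := hup T (le_trans ht00 hT0)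
        linarith
      rw [← hLeq]; exact hLrt
    · -- r 0 = rm : constant case
      have hconst : ∀ t ≥ (0:ℝ), r t = rm := by
        intro t ht
        have happ := ode_const_of_lip (F := G) (a := 0) (b := t)
          (fun u hu => hgr u hu.1) hB hGrm hlipG
        exact happ t ⟨ht, le_refl t⟩
      apply tendsto_const_nhds.congr'
      filter_upwards [eventually_ge_atTop (0:ℝ)] with u hu
      exact (hconst u hu).symm
    · -- rm < r 0 : decreasing case
      have hner := hne (ne_of_gt hC)
      have hlow : ∀ t ≥ (0:ℝ), rm < r t := by
        intro t ht
        rcases lt_or_ge rm (r t) with h | h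
        · exact h
        · exfalso
          obtain ⟨u, hu, hru⟩ := intermediate_value_Icc' ht (hcontr 0 t le_rfl)
            (⟨h, hC.le⟩ : rm ∈ Icc (r t) (r 0))
          exact hner u hu.1 hru
      have hup : ∀ t ≥ (0:ℝ), r t ≤ r 0 :=
        stay_le hgr (hGneg (r 0) hr0 hC hr01) (le_refl (r 0))
      have hanti : AntitoneOn r (Ici 0) := by
        apply antitoneOn_of_deriv_nonpos (convex_Ici 0)
        · exact fun u hu => ((hgr u hu).continuousAt).continuousWithinAt
        · intro u hu; rw [interior_Ici] at hu
          exact ((hgr u hu.le).differentiableAt).differentiableWithinAt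
        · intro u hu; rw [interior_Ici] at hu
          rw [(hgr u hu.le).deriv]
          exact (hGneg (r u) (lt_trans hzrm (hlow u hu.le)) (hlow u hu.le)
            (le_trans (hup u hu.le) hr01)).le
      have hrtanti : Antitone (fun t => r (max t 0)) := fun a b hab =>
        hanti (mem_Ici.mpr (le_max_right a 0)) (mem_Ici.mpr (le_max_right b 0))
          (max_le_max hab le_rfl)
      have hrtbdd : BddBelow (Set.range (fun t => r (max t 0))) := by
        refine ⟨rm, ?_⟩
        rintro x ⟨u, rfl⟩
        exact (hlow _ (le_max_right u 0)).le
      have hL := tendsto_atTop_ciInf hrtanti hrtbdd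
      have hLrt : Tendsto r atTop (nhds (⨅ u, r (max u 0))) := by
        apply hL.congr'
        filter_upwards [eventually_ge_atTop (0:ℝ)] with u hu
        rw [max_eq_left hu]
      set L := ⨅ u, r (max u 0) with hLdef
      have hLge : rm ≤ L := ge_of_tendsto hLrt (by
        filter_upwards [eventually_ge_atTop (0:ℝ)] with u hu
        exact (hlow u hu).le)
      have hLle : L ≤ r 0 := le_of_tendsto hLrt (by
        filter_upwards [eventually_ge_atTop (0:ℝ)] with u hu
        exact hup u hu)
      have hLeq : L = rm := by
        by_contra hne2
        have hLlt : rm < L := lt_of_le_of_ne hLge (Ne.symm hne2)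
        have hGL : G L < 0 := hGneg L (lt_trans hzrm hLlt) hLlt (le_trans hLle hr01)
        have hev : ∀ᶠ u in atTop, G (r u) ≤ G L / 2 := by
          have h1 : Tendsto (fun u => G (r u)) atTop (nhds (G L)) :=
            (hcontG.tendsto L).comp hLrt
          exact (h1.eventually (gt_mem_nhds (by linarith : G L < G L / 2))).mono
            fun u hu => hu.le
        obtain ⟨t0', ht0'⟩ := eventually_atTop.mp hev
        set t0 := max t0' 0 with ht0def
        have ht00 : (0:ℝ) ≤ t0 := le_max_right _ _
        have hgrow := grow_of_deriv_ge (y := fun u => -r u) (d := fun u => -(G (r u)))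
          (m := -(G L / 2)) (t0 := t0)
          (fun u hu => (hgr u (le_trans ht00 hu)).neg)
          (fun u hu => by have := ht0' u (le_trans (le_max_left _ _) hu); linarith)
        set T := t0 + (r t0 - rm)/(-(G L / 2)) + 1 with hTdef
        have hrt0 : rm < r t0 := hlow t0 ht00
        have hGL2 : 0 < -(G L / 2) := by linarith
        have hdiv : 0 ≤ (r t0 - rm)/(-(G L / 2)) := div_nonneg (by linarith) hGL2.le
        have hT0 : t0 ≤ T := by rw [hTdef]; linarith
        have hgT : -r t0 + -(G L / 2) * (T - t0) ≤ -r T := hgrow T hT0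
        have hGL2' : -(G L / 2) ≠ 0 := ne_of_gt hGL2
        have h5 : (r t0 - rm) / (-(G L / 2)) * (-(G L / 2)) = r t0 - rm :=
          div_mul_cancel₀ _ hGL2'
        have h6 : T - t0 = (r t0 - rm) / (-(G L / 2)) + 1 := by rw [hTdef]; ring
        have hcalc : -r t0 + -(G L / 2) * (T - t0) = -rm + -(G L / 2) := by
          calc -r t0 + -(G L / 2) * (T - t0)
              = -r t0 + (r t0 - rm) / (-(G L / 2)) * (-(G L / 2)) + -(G L / 2) := by
                rw [h6]; ring
            _ = -rm + -(G L / 2) := by rw [h5]; ring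
        have := hlow T (le_trans ht00 hT0)
        linarith
      rw [← hLeq]; exact hLrt
  have hp_t : Tendsto p atTop (nhds zmid) :=
    tendsto_const_nhds.congr' (by
      filter_upwards [eventually_ge_atTop (0:ℝ)] with u hu
      exact (hpz u hu).symm)
  exact ⟨rm, ⟨hzrm, by linarith⟩, by rw [hfact rm]; ring, hp_t.prodMk_nhds hrt_lim⟩
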